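/- arXiv:1708.02724 — 2 statements merged into one kernel-verified Lean document; each statement's English description precedes it below -/
import Mathlib

section
/- Boundary derivative formulas and signs for the elliptic problem on [0,L] with monotone data: Let 0 < L < π/2, let g : [0,L] → ℝ be continuously differentiable with g ≥ 0 and g' ≥ 0 on [0,L], and let G : [0,L] → ℝ be twice continuously differentiable with 4G + G'' = g on [0,L] and G(0) = G(L) = 0. Then: G'(L) = (1/sin(2L)) ∫₀^L g(θ) sin(2θ) dθ; G'(0) = (cos(2L)/sin(2L)) ∫₀^L g(θ) sin(2θ) dθ − ∫₀^L g(θ) cos(2θ) dθ; and G'(L) ≥ 0, G'(0) ≤ 0, and G'(0) + G'(L) ≥ 0. -/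
open Set Real intervalIntegral
open scoped Real
open scoped Topology

noncomputable section

/-- **Boundary derivative formulas and signs for the elliptic problem on `[0,L]` with
monotone data (Lemma 4.6).** If `g ≥ 0`, `g' ≥ 0` on `[0,L]` and `4G + G'' = g` with
`G(0) = G(L) = 0`, then
`G'(L) = (1/sin 2L) ∫₀^L g sin(2θ)dθ`,
`G'(0) = (cos 2L / sin 2L) ∫₀^L g sin(2θ)dθ - ∫₀^L g cos(2θ)dθ`,
and `G'(L) ≥ 0`, `G'(0) ≤ 0`, `G'(0) + G'(L) ≥ 0`. -/
theorem elliptic_bvp_boundary_derivatives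
    (L : ℝ) (hL0 : 0 < L) (hL : L < π/2)
    (g G : ℝ → ℝ)
    (hgC1 : ContDiffOn ℝ 1 g (Icc 0 L))
    (hgpos : ∀ θ ∈ Icc (0:ℝ) L, 0 ≤ g θ)
    (hgmono : ∀ θ ∈ Icc (0:ℝ) L, 0 ≤ derivWithin g (Icc 0 L) θ)
    (hGC2 : ContDiffOn ℝ 2 G (Icc 0 L))
    (hGeq : ∀ θ ∈ Icc (0:ℝ) L, 4 * G θ + iteratedDerivWithin 2 G (Icc 0 L) θ = g θ)
    (hbc0 : G 0 = 0) (hbcL : G L = 0) :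
    derivWithin G (Icc 0 L) L =
      (1 / Real.sin (2*L)) * ∫ θ in (0:ℝ)..L, g θ * Real.sin (2*θ) ∧
    derivWithin G (Icc 0 L) 0 =
      (Real.cos (2*L) / Real.sin (2*L)) * (∫ θ in (0:ℝ)..L, g θ * Real.sin (2*θ)) -
        ∫ θ in (0:ℝ)..L, g θ * Real.cos (2*θ) ∧
    0 ≤ derivWithin G (Icc 0 L) L ∧
    derivWithin G (Icc 0 L) 0 ≤ 0 ∧
    0 ≤ derivWithin G (Icc 0 L) 0 + derivWithin G (Icc 0 L) L := by
  have hLle : (0:ℝ) ≤ L := hL0.le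
  have hpi : 0 < π := Real.pi_pos
  set s := Icc (0:ℝ) L with hs
  have hmemL : L ∈ s := by simp [hs, hLle]
  have hmem0 : (0:ℝ) ∈ s := by simp [hs, hLle]
  have huniq : UniqueDiffOn ℝ s := uniqueDiffOn_Icc hL0
  set G1 := derivWithin G s with hG1def
  have hG1C1 : ContDiffOn ℝ 1 G1 s := hGC2.derivWithin huniq (by norm_num)
  have hGd : DifferentiableOn ℝ G s := hGC2.differentiableOn (by norm_num)
  have hG1d : DifferentiableOn ℝ G1 s := hG1C1.differentiableOn (by norm_num)
  have hiter : ∀ x ∈ s, iteratedDerivWithin 2 G s x = derivWithin G1 s x := by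
    intro x hx
    rw [show (2:ℕ) = 1 + 1 from rfl, iteratedDerivWithin_succ',
      iteratedDerivWithin_one]
  -- trig facts
  have hsin2L : 0 < Real.sin (2*L) :=
    Real.sin_pos_of_pos_of_lt_pi (by linarith) (by linarith)
  have hcosL : 0 < Real.cos L := Real.cos_pos_of_mem_Ioo ⟨by linarith, hL⟩
  have hsinL : 0 < Real.sin L := Real.sin_pos_of_pos_of_lt_pi hL0 (by linarith)
  -- integrability helpers
  have hgcont : ContinuousOn g s := hgC1.continuousOn
  have hIcc : uIcc (0:ℝ) L = s := uIcc_of_le hLle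
  have hintsin : IntervalIntegrable (fun θ => g θ * Real.sin (2*θ)) MeasureTheory.volume 0 L := by
    apply ContinuousOn.intervalIntegrable
    rw [hIcc]
    exact hgcont.mul (Real.continuous_sin.comp (continuous_const.mul continuous_id)).continuousOn
  have hintcos : IntervalIntegrable (fun θ => g θ * Real.cos (2*θ)) MeasureTheory.volume 0 L := by
    apply ContinuousOn.intervalIntegrable
    rw [hIcc]
    exact hgcont.mul (Real.continuous_cos.comp (continuous_const.mul continuous_id)).continuousOn
  -- derivative facts for trig functions
  have hlin : ∀ x : ℝ, HasDerivAt (fun θ : ℝ => 2*θ) 2 x := by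
    intro x
    simpa using (hasDerivAt_id x).const_mul 2
  have hsinD : ∀ x : ℝ, HasDerivAt (fun θ : ℝ => Real.sin (2*θ)) (2 * Real.cos (2*x)) x := by
    intro x
    simpa [mul_comm] using (hlin x).sin
  have hcosD : ∀ x : ℝ, HasDerivAt (fun θ : ℝ => Real.cos (2*θ)) (-(2 * Real.sin (2*x))) x := by
    intro x
    simpa [mul_comm] using (hlin x).cos
  -- the two integration-by-parts identities
  have keys : (∫ θ in (0:ℝ)..L, g θ * Real.sin (2*θ)) = G1 L * Real.sin (2*L) ∧
      (∫ θ in (0:ℝ)..L, g θ * Real.cos (2*θ)) = G1 L * Real.cos (2*L) - G1 0 := by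
    constructor
    · -- F θ = G1 θ * sin 2θ - 2 G θ cos 2θ
      have h := intervalIntegral.integral_eq_sub_of_hasDeriv_right_of_le hLle
        (f := fun θ => G1 θ * Real.sin (2*θ) - 2 * G θ * Real.cos (2*θ))
        (f' := fun θ => g θ * Real.sin (2*θ)) ?_ ?_ hintsin
      · rw [h]
        simp [hbc0, hbcL]
      · apply ContinuousOn.sub
        · exact hG1C1.continuousOn.mul
            (Real.continuous_sin.comp (continuous_const.mul continuous_id)).continuousOn
        · exact (continuousOn_const.mul hGd.continuousOn).mul
            (Real.continuous_cos.comp (continuous_const.mul continuous_id)).continuousOn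
      · intro x hx
        have hxs : x ∈ s := Ioo_subset_Icc_self hx
        have hnhds : s ∈ 𝓝[>] x := Icc_mem_nhdsGT_of_mem ⟨hx.1.le, hx.2⟩
        have hG : HasDerivWithinAt G (G1 x) s x := (hGd x hxs).hasDerivWithinAt
        have hG1 : HasDerivWithinAt G1 (derivWithin G1 s x) s x := (hG1d x hxs).hasDerivWithinAt
        have hD : HasDerivWithinAt (fun θ => G1 θ * Real.sin (2*θ) - 2 * G θ * Real.cos (2*θ))
            (derivWithin G1 s x * Real.sin (2*x) + G1 x * (2 * Real.cos (2*x)) -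
              ((2 * G1 x) * Real.cos (2*x) + (2 * G x) * (-(2 * Real.sin (2*x))))) s x := by
          exact (hG1.mul ((hsinD x).hasDerivWithinAt)).sub
            (((hG.const_mul 2)).mul ((hcosD x).hasDerivWithinAt))
        have heq : derivWithin G1 s x * Real.sin (2*x) + G1 x * (2 * Real.cos (2*x)) -
            ((2 * G1 x) * Real.cos (2*x) + (2 * G x) * (-(2 * Real.sin (2*x)))) =
            g x * Real.sin (2*x) := by
          have := hGeq x hxs
          rw [hiter x hxs] at this
          linear_combination Real.sin (2*x) * this
        rw [heq] at hD
        exact hD.mono_of_mem_nhdsWithin hnhds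
    · -- H θ = G1 θ * cos 2θ + 2 G θ sin 2θ
      have h := intervalIntegral.integral_eq_sub_of_hasDeriv_right_of_le hLle
        (f := fun θ => G1 θ * Real.cos (2*θ) + 2 * G θ * Real.sin (2*θ))
        (f' := fun θ => g θ * Real.cos (2*θ)) ?_ ?_ hintcos
      · rw [h]
        simp [hbc0, hbcL]
      · apply ContinuousOn.add
        · exact hG1C1.continuousOn.mul
            (Real.continuous_cos.comp (continuous_const.mul continuous_id)).continuousOn
        · exact (continuousOn_const.mul hGd.continuousOn).mul
            (Real.continuous_sin.comp (continuous_const.mul continuous_id)).continuousOn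
      · intro x hx
        have hxs : x ∈ s := Ioo_subset_Icc_self hx
        have hnhds : s ∈ 𝓝[>] x := Icc_mem_nhdsGT_of_mem ⟨hx.1.le, hx.2⟩
        have hG : HasDerivWithinAt G (G1 x) s x := (hGd x hxs).hasDerivWithinAt
        have hG1 : HasDerivWithinAt G1 (derivWithin G1 s x) s x := (hG1d x hxs).hasDerivWithinAt
        have hD : HasDerivWithinAt (fun θ => G1 θ * Real.cos (2*θ) + 2 * G θ * Real.sin (2*θ))
            (derivWithin G1 s x * Real.cos (2*x) + G1 x * (-(2 * Real.sin (2*x))) +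
              ((2 * G1 x) * Real.sin (2*x) + (2 * G x) * (2 * Real.cos (2*x)))) s x := by
          exact (hG1.mul ((hcosD x).hasDerivWithinAt)).add
            (((hG.const_mul 2)).mul ((hsinD x).hasDerivWithinAt))
        have heq : derivWithin G1 s x * Real.cos (2*x) + G1 x * (-(2 * Real.sin (2*x))) +
            ((2 * G1 x) * Real.sin (2*x) + (2 * G x) * (2 * Real.cos (2*x))) =
            g x * Real.cos (2*x) := by
          have := hGeq x hxs
          rw [hiter x hxs] at this
          linear_combination Real.cos (2*x) * this
        rw [heq] at hD
        exact hD.mono_of_mem_nhdsWithin hnhds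
  obtain ⟨key1, key2⟩ := keys
  set I1 := ∫ θ in (0:ℝ)..L, g θ * Real.sin (2*θ) with hI1
  set I2 := ∫ θ in (0:ℝ)..L, g θ * Real.cos (2*θ) with hI2
  -- I1 ≥ 0
  have hI1nn : 0 ≤ I1 := by
    apply integral_nonneg hLle
    intro θ hθ
    exact mul_nonneg (hgpos θ hθ)
      (Real.sin_nonneg_of_nonneg_of_le_pi (by linarith [hθ.1]) (by nlinarith [hθ.2]))
  -- formula for G'(L)
  have hGL : G1 L = (1 / Real.sin (2*L)) * I1 := by
    field_simp [key1]
    exact key1.symm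
  -- formula for G'(0)
  have hG0 : G1 0 = (Real.cos (2*L) / Real.sin (2*L)) * I1 - I2 := by
    rw [key2, hGL]; field_simp; ring
  have hGLnn : 0 ≤ G1 L := by
    rw [hGL]; positivity
  -- G'(0) ≤ 0 : G1 0 * sin 2L = cos2L * I1 - sin2L * I2 = ∫ g sin(2θ-2L) ≤ 0
  have hJ2 : (∫ θ in (0:ℝ)..L, g θ * Real.sin (2*θ - 2*L)) =
      Real.cos (2*L) * I1 - Real.sin (2*L) * I2 := by
    have h1 : ∀ θ : ℝ, g θ * Real.sin (2*θ - 2*L) =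
        Real.cos (2*L) * (g θ * Real.sin (2*θ)) - Real.sin (2*L) * (g θ * Real.cos (2*θ)) := by
      intro θ; rw [Real.sin_sub]; ring
    simp_rw [h1]
    rw [integral_sub (hintsin.const_mul _) (hintcos.const_mul _),
      integral_const_mul, integral_const_mul]
  have hJ2np : (∫ θ in (0:ℝ)..L, g θ * Real.sin (2*θ - 2*L)) ≤ 0 := by
    have h : 0 ≤ ∫ θ in (0:ℝ)..L, -(g θ * Real.sin (2*θ - 2*L)) := by
      apply integral_nonneg hLle
      intro θ hθ
      have hsn : Real.sin (2*θ - 2*L) ≤ 0 :=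
        Real.sin_nonpos_of_nonpos_of_neg_pi_le (by linarith [hθ.2]) (by nlinarith [hθ.1])
      have := mul_nonpos_of_nonneg_of_nonpos (hgpos θ hθ) hsn
      linarith
    rw [integral_neg] at h
    linarith
  have hG0np : G1 0 ≤ 0 := by
    have h : G1 0 * Real.sin (2*L) ≤ 0 := by
      have : G1 0 * Real.sin (2*L) = Real.cos (2*L) * I1 - Real.sin (2*L) * I2 := by
        rw [hG0]; field_simp
      rw [this, ← hJ2]; exact hJ2np
    nlinarith
  -- G'(0) + G'(L) ≥ 0 via J = ∫ g sin(2θ - L)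
  have hgmonoOn : MonotoneOn g s := by
    apply monotoneOn_of_deriv_nonneg (convex_Icc 0 L) hgcont
    · exact (hgC1.differentiableOn (by norm_num)).mono interior_subset
    · intro x hx
      rw [interior_Icc] at hx
      have hnh : s ∈ 𝓝 x := Icc_mem_nhds hx.1 hx.2
      rw [← derivWithin_of_mem_nhds hnh]
      exact hgmono x (Ioo_subset_Icc_self hx)
  set J := ∫ θ in (0:ℝ)..L, g θ * Real.sin (2*θ - L) with hJ
  have hintJ : IntervalIntegrable (fun θ => g θ * Real.sin (2*θ - L)) MeasureTheory.volume 0 L := by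
    apply ContinuousOn.intervalIntegrable
    rw [hIcc]
    exact hgcont.mul (Real.continuous_sin.comp ((continuous_const.mul continuous_id).sub continuous_const)).continuousOn
  have hintJ' : IntervalIntegrable (fun θ => g (L - θ) * Real.sin (2*θ - L))
      MeasureTheory.volume 0 L := by
    apply ContinuousOn.intervalIntegrable
    rw [hIcc]
    apply ContinuousOn.mul
    · apply hgcont.comp (Continuous.continuousOn (continuous_const.sub continuous_id))
      intro x hx
      have h1 : (0:ℝ) ≤ x := hx.1
      have h2 : x ≤ L := hx.2
      show L - x ∈ s
      exact ⟨by linarith, by linarith⟩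
    · exact (Real.continuous_sin.comp ((continuous_const.mul continuous_id).sub continuous_const)).continuousOn
  have hrefl : (∫ θ in (0:ℝ)..L, g (L - θ) * Real.sin (2*θ - L)) = -J := by
    have h := integral_comp_sub_left
      (a := (0:ℝ)) (b := L) (fun θ => g θ * Real.sin (2*θ - L)) L
    simp only [sub_zero, sub_self] at h
    have h2 : ∀ θ : ℝ, g (L - θ) * Real.sin (2*(L-θ) - L) = -(g (L - θ) * Real.sin (2*θ - L)) := by
      intro θ
      have : (2*(L-θ) - L) = -(2*θ - L) := by ring
      rw [this, Real.sin_neg]; ring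
    rw [hJ, ← h]
    simp_rw [h2]
    rw [integral_neg]
    ring
  have hJnn : 0 ≤ J := by
    have h2J : 2 * J = ∫ θ in (0:ℝ)..L, (g θ - g (L - θ)) * Real.sin (2*θ - L) := by
      have : ∀ θ : ℝ, (g θ - g (L - θ)) * Real.sin (2*θ - L) =
          g θ * Real.sin (2*θ - L) - g (L - θ) * Real.sin (2*θ - L) := fun θ => by ring
      simp_rw [this]
      rw [integral_sub hintJ hintJ', hrefl, ← hJ]
      ring
    have hnn : 0 ≤ ∫ θ in (0:ℝ)..L, (g θ - g (L - θ)) * Real.sin (2*θ - L) := by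
      apply integral_nonneg hLle
      intro θ hθ
      have hθ1 : (0:ℝ) ≤ θ := hθ.1
      have hθ2 : θ ≤ L := hθ.2
      have hmem1 : θ ∈ s := hθ
      have hmem2 : L - θ ∈ s := ⟨by linarith, by linarith⟩
      rcases le_total θ (L/2) with hc | hc
      · refine mul_nonneg_iff.2 (Or.inr ⟨?_, ?_⟩)
        · have := hgmonoOn hmem1 hmem2 (by linarith)
          linarith
        · exact Real.sin_nonpos_of_nonpos_of_neg_pi_le (by linarith) (by nlinarith)
      · apply mul_nonneg
        · have := hgmonoOn hmem2 hmem1 (by linarith)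
          linarith
        · exact Real.sin_nonneg_of_nonneg_of_le_pi (by linarith) (by nlinarith)
    linarith
  have hJeq : J = Real.cos L * I1 - Real.sin L * I2 := by
    have h1 : ∀ θ : ℝ, g θ * Real.sin (2*θ - L) =
        Real.cos L * (g θ * Real.sin (2*θ)) - Real.sin L * (g θ * Real.cos (2*θ)) := by
      intro θ; rw [Real.sin_sub]; ring
    rw [hJ]
    simp_rw [h1]
    rw [integral_sub (hintsin.const_mul _) (hintcos.const_mul _),
      integral_const_mul, integral_const_mul]
  have hsum : 0 ≤ G1 0 + G1 L := by
    have hkey : (G1 0 + G1 L) * Real.sin (2*L) = 2 * Real.cos L * J := by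
      rw [hJeq]
      have hs2 : Real.sin (2*L) = 2 * Real.sin L * Real.cos L := Real.sin_two_mul L
      have hc2 : Real.cos (2*L) = 2 * Real.cos L ^ 2 - 1 := Real.cos_two_mul L
      have e1 : I1 = G1 L * Real.sin (2*L) := key1
      have e2 : I2 = G1 L * Real.cos (2*L) - G1 0 := key2
      rw [e1, e2, hs2, hc2]; ring
    have h0 : 0 ≤ (G1 0 + G1 L) * Real.sin (2*L) :=
      hkey ▸ mul_nonneg (mul_nonneg (by norm_num : (0:ℝ) ≤ 2) hcosL.le) hJnn
    exact (mul_nonneg_iff_of_pos_right hsin2L).mp h0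
  exact ⟨hGL, hG0, hGLnn, hG0np, hsum⟩
end
end

section
/- Lower bound for the boundary derivative in terms of the mass of the data: Let 0 < L < π/2. There exists a constant c = c(L) > 0, depending only on L, such that for every continuously differentiable g : [0,L] → ℝ with g ≥ 0 and g' ≥ 0 on [0,L], and every twice continuously differentiable G : [0,L] → ℝ with 4G + G'' = g on [0,L] and G(0) = G(L) = 0, one has G'(L) ≥ c ∫₀^L g(θ) dθ. -/
open Set Real intervalIntegral
open scoped Real

noncomputable section

/-- **Lower bound for the boundary derivative in terms of the mass of the data
(Lemma 4.7).** For `0 < L < π/2` there is `c = c(L) > 0` such that for every `C¹` function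
`g ≥ 0` with `g' ≥ 0` on `[0,L]` and every `C²` function `G` with `4G + G'' = g`,
`G(0) = G(L) = 0`, one has `G'(L) ≥ c ∫₀^L g`. -/
theorem elliptic_bvp_mass_lower_bound
    (L : ℝ) (hL0 : 0 < L) (hL : L < π/2) :
    ∃ c : ℝ, 0 < c ∧
      ∀ g G : ℝ → ℝ,
      ContDiffOn ℝ 1 g (Icc 0 L) →
      (∀ θ ∈ Icc (0:ℝ) L, 0 ≤ g θ) →
      (∀ θ ∈ Icc (0:ℝ) L, 0 ≤ derivWithin g (Icc 0 L) θ) →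
      ContDiffOn ℝ 2 G (Icc 0 L) →
      (∀ θ ∈ Icc (0:ℝ) L, 4 * G θ + iteratedDerivWithin 2 G (Icc 0 L) θ = g θ) →
      G 0 = 0 → G L = 0 →
      c * (∫ θ in (0:ℝ)..L, g θ) ≤ derivWithin G (Icc 0 L) L := by
  have hπ : 0 < π := Real.pi_pos
  have hsin2L : 0 < Real.sin (2*L) :=
    Real.sin_pos_of_pos_of_lt_pi (by linarith) (by linarith)
  have hsinL : 0 < Real.sin L := Real.sin_pos_of_pos_of_lt_pi hL0 (by linarith)
  set M := min (Real.sin L) (Real.sin (2*L)) with hMdef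
  have hMpos : 0 < M := lt_min hsinL hsin2L
  refine ⟨M / (2 * Real.sin (2*L)), by positivity, ?_⟩
  intro g G hg hg0 hg' hG hode hG0 hGL
  have hud : UniqueDiffOn ℝ (Icc (0:ℝ) L) := uniqueDiffOn_Icc hL0
  set s : Set ℝ := Icc (0:ℝ) L with hsdef
  set G1 := derivWithin G s with hG1def
  have hGd : DifferentiableOn ℝ G s := hG.differentiableOn (by norm_num)
  have hG1 : ContDiffOn ℝ 1 G1 s := hG.derivWithin hud (by norm_num)
  have hG1d : DifferentiableOn ℝ G1 s := hG1.differentiableOn (by norm_num)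
  -- the second iterated derivative is the derivative of `G1`
  have hiter : ∀ θ ∈ s, iteratedDerivWithin 2 G s θ = derivWithin G1 s θ := by
    intro θ hθ
    rw [show (2:ℕ) = 1 + 1 from rfl, iteratedDerivWithin_succ]
    apply derivWithin_congr
    · intro y hy; exact congrFun iteratedDerivWithin_one y
    · exact congrFun iteratedDerivWithin_one θ
  -- derivatives of sin(2x), cos(2x)
  have hsin : ∀ θ : ℝ, HasDerivAt (fun x => Real.sin (2*x)) (2 * Real.cos (2*θ)) θ := by
    intro θ
    simpa [mul_comm] using ((hasDerivAt_id θ).const_mul 2).sin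
  have hcos : ∀ θ : ℝ, HasDerivAt (fun x => Real.cos (2*x)) (-(2 * Real.sin (2*θ))) θ := by
    intro θ
    have := ((hasDerivAt_id θ).const_mul 2).cos
    simpa [mul_comm] using this
  -- the auxiliary function H
  set H : ℝ → ℝ := fun θ => G1 θ * Real.sin (2*θ) - 2 * (G θ * Real.cos (2*θ)) with hHdef
  have hHd : ∀ θ ∈ s, HasDerivWithinAt H (g θ * Real.sin (2*θ)) s θ := by
    intro θ hθ
    have h1 : HasDerivWithinAt G (G1 θ) s θ := (hGd θ hθ).hasDerivWithinAt
    have h2 : HasDerivWithinAt G1 (derivWithin G1 s θ) s θ := (hG1d θ hθ).hasDerivWithinAt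
    have key : derivWithin G1 s θ = g θ - 4 * G θ := by
      have h := hode θ hθ
      rw [hiter θ hθ] at h
      linarith
    have hcomb := (h2.mul (hsin θ).hasDerivWithinAt).sub
      ((h1.mul (hcos θ).hasDerivWithinAt).const_mul 2)
    exact hcomb.congr_deriv (by rw [key]; ring)
  have hsinc : Continuous (fun x : ℝ => Real.sin (2*x)) :=
    Real.continuous_sin.comp (continuous_const.mul continuous_id)
  have hcosc : Continuous (fun x : ℝ => Real.cos (2*x)) :=
    Real.continuous_cos.comp (continuous_const.mul continuous_id)
  have hHcont : ContinuousOn H s :=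
    (hG1.continuousOn.mul hsinc.continuousOn).sub
      (continuousOn_const.mul ((hGd.continuousOn).mul hcosc.continuousOn))
  have hgc : ContinuousOn g s := hg.continuousOn
  have hint : IntervalIntegrable (fun θ => g θ * Real.sin (2*θ)) MeasureTheory.volume 0 L := by
    apply ContinuousOn.intervalIntegrable
    rw [uIcc_of_le hL0.le]
    exact hgc.mul hsinc.continuousOn
  -- Fundamental theorem of calculus: ∫ g sin(2θ) = G'(L) sin(2L)
  have hFTC : ∫ θ in (0:ℝ)..L, g θ * Real.sin (2*θ) = G1 L * Real.sin (2*L) := by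
    have h := intervalIntegral.integral_eq_sub_of_hasDeriv_right_of_le hL0.le hHcont
      (fun x hx => ((hHd x (Ioo_subset_Icc_self hx)).hasDerivAt
        (Icc_mem_nhds hx.1 hx.2)).hasDerivWithinAt) hint
    rw [h]
    simp [hHdef, hG0, hGL]
  -- g is monotone on s
  have hmono : MonotoneOn g s := by
    apply monotoneOn_of_deriv_nonneg (convex_Icc 0 L) hgc
      ((hg.differentiableOn (by norm_num)).mono interior_subset)
    intro x hx
    rw [interior_Icc] at hx
    rw [← derivWithin_of_mem_nhds (Icc_mem_nhds hx.1 hx.2)]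
    exact hg' x (Ioo_subset_Icc_self hx)
  have h0half : (0:ℝ) ≤ L/2 := by linarith
  have hhalfL : L/2 ≤ L := by linarith
  have hhalfmem : L/2 ∈ s := ⟨h0half, hhalfL⟩
  -- integrability of g on subintervals
  have hgint : ∀ a b : ℝ, a ∈ s → b ∈ s → IntervalIntegrable g MeasureTheory.volume a b := by
    intro a b ha hb
    apply ContinuousOn.intervalIntegrable
    exact hgc.mono (uIcc_subset_Icc ha hb)
  have hgsint : ∀ a b : ℝ, a ∈ s → b ∈ s →
      IntervalIntegrable (fun θ => g θ * Real.sin (2*θ)) MeasureTheory.volume a b := by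
    intro a b ha hb
    apply ContinuousOn.intervalIntegrable
    exact (hgc.mono (uIcc_subset_Icc ha hb)).mul hsinc.continuousOn
  have h0mem : (0:ℝ) ∈ s := ⟨le_rfl, hL0.le⟩
  have hLmem : L ∈ s := ⟨hL0.le, le_rfl⟩
  set A := ∫ θ in (0:ℝ)..(L/2), g θ with hAdef
  set B := ∫ θ in (L/2)..L, g θ with hBdef
  -- A ≤ B via the constant g(L/2)
  have hA : A ≤ (L/2) * g (L/2) := by
    have := intervalIntegral.integral_mono_on h0half (hgint 0 (L/2) h0mem hhalfmem)
      (_root_.intervalIntegrable_const (c := g (L/2)))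
      (fun x hx => hmono ⟨hx.1, le_trans hx.2 hhalfL⟩ hhalfmem hx.2)
    simpa [smul_eq_mul, mul_comm] using this
  have hB : (L/2) * g (L/2) ≤ B := by
    have := intervalIntegral.integral_mono_on hhalfL
      (_root_.intervalIntegrable_const (c := g (L/2)))
      (hgint (L/2) L hhalfmem hLmem)
      (fun x hx => hmono hhalfmem ⟨le_trans h0half hx.1, hx.2⟩ hx.1)
    have h2 : ∫ _ in (L/2)..L, g (L/2) = (L - L/2) * g (L/2) := by
      simp [smul_eq_mul]
    rw [h2] at this
    nlinarith
  have hAB : A ≤ B := le_trans hA hB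
  -- sin(2x) ≥ M on [L/2, L] by concavity of sin on [0, π]
  have hMle : ∀ x ∈ Icc (L/2) L, M ≤ Real.sin (2*x) := by
    intro x hx
    have h2x : 2*x ∈ segment ℝ L (2*L) := by
      rw [segment_eq_Icc (by linarith)]
      exact ⟨by linarith [hx.1], by linarith [hx.2]⟩
    exact (strictConcaveOn_sin_Icc.concaveOn).ge_on_segment
      ⟨hL0.le, by linarith⟩ ⟨by linarith, by linarith⟩ h2x
  -- lower bounds on the weighted integral
  have hJ1 : 0 ≤ ∫ θ in (0:ℝ)..(L/2), g θ * Real.sin (2*θ) := by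
    apply intervalIntegral.integral_nonneg h0half
    intro u hu
    have hus : u ∈ s := ⟨hu.1, le_trans hu.2 hhalfL⟩
    have : 0 ≤ Real.sin (2*u) :=
      Real.sin_nonneg_of_nonneg_of_le_pi (by linarith [hu.1]) (by linarith [hu.2])
    exact mul_nonneg (hg0 u hus) this
  have hJ2 : M * B ≤ ∫ θ in (L/2)..L, g θ * Real.sin (2*θ) := by
    have := intervalIntegral.integral_mono_on hhalfL
      ((hgint (L/2) L hhalfmem hLmem).const_mul M)
      (hgsint (L/2) L hhalfmem hLmem)
      (fun x hx => by
        have hxs : x ∈ s := ⟨le_trans h0half hx.1, hx.2⟩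
        calc M * g x ≤ Real.sin (2*x) * g x :=
              mul_le_mul_of_nonneg_right (hMle x hx) (hg0 x hxs)
          _ = g x * Real.sin (2*x) := mul_comm _ _)
    rwa [intervalIntegral.integral_const_mul] at this
  -- splitting the integrals
  have hsplitg : A + B = ∫ θ in (0:ℝ)..L, g θ :=
    intervalIntegral.integral_add_adjacent_intervals
      (hgint 0 (L/2) h0mem hhalfmem) (hgint (L/2) L hhalfmem hLmem)
  have hsplitgs : (∫ θ in (0:ℝ)..(L/2), g θ * Real.sin (2*θ))
      + (∫ θ in (L/2)..L, g θ * Real.sin (2*θ))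
      = ∫ θ in (0:ℝ)..L, g θ * Real.sin (2*θ) :=
    intervalIntegral.integral_add_adjacent_intervals
      (hgsint 0 (L/2) h0mem hhalfmem) (hgsint (L/2) L hhalfmem hLmem)
  -- conclusion
  rw [← hsplitg, div_mul_eq_mul_div, div_le_iff₀ (by positivity)]
  have hMA : M * A ≤ M * B := mul_le_mul_of_nonneg_left hAB hMpos.le
  nlinarith [hJ1, hJ2, hsplitgs, hFTC, hMA, hsin2L, hMpos]
end
end
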